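/- Let Q_j : gl_n(ℂ) → ℂ be defined by det(t·Id − X) = Σ_{j=0}^n (−1)^j t^{n−j} Q_j(X). Then each Q_j is a GL_n(ℂ)-conjugation-invariant homogeneous polynomial of degree j on gl_n, and Q_1,...,Q_n generate the algebra ℂ[gl_n]^{GL_n} of conjugation-invariant polynomial functions. -/

import Mathlib

open MvPolynomial

/-- The generic `n × n` matrix, whose entries are the variables `X (i,j)`. -/
noncomputable def genericMatrix (n : ℕ) :
    Matrix (Fin n) (Fin n) (MvPolynomial (Fin n × Fin n) ℂ) :=
  Matrix.of fun i j => MvPolynomial.X (i, j)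

/-- `Q_j`, as a polynomial function on `gl_n`: it is `(-1)^j` times the coefficient of
`t^(n-j)` in `det(t·Id − X)`, i.e. in the characteristic polynomial of the generic matrix. -/
noncomputable def Qpoly (n j : ℕ) : MvPolynomial (Fin n × Fin n) ℂ :=
  (-1 : MvPolynomial (Fin n × Fin n) ℂ) ^ j * ((genericMatrix n).charpoly.coeff (n - j))

section Aux

lemma Qpoly_homog (n j : ℕ) (h2 : j ≤ n) : (Qpoly n j).IsHomogeneous j := by
  have hg : genericMatrix n = Matrix.mvPolynomialX (Fin n) (Fin n) ℂ := rfl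
  have H := Matrix.charpoly.univ_coeff_isHomogeneous ℂ (Fin n) (n - j) j
    (by simp only [Fintype.card_fin]; omega)
  rw [Qpoly, hg]
  have h1 : ((-1 : MvPolynomial (Fin n × Fin n) ℂ) ^ j) = C ((-1:ℂ)^j) := by
    simp [map_pow]
  rw [h1]
  simpa using (isHomogeneous_C (Fin n × Fin n) ((-1:ℂ)^j)).mul H

lemma eval_Qpoly {n : ℕ} (X : Matrix (Fin n) (Fin n) ℂ) (j : ℕ) :
    MvPolynomial.eval (fun q => X q.1 q.2) (Qpoly n j) =
      (-1 : ℂ)^j * X.charpoly.coeff (n - j) := by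
  have hg : genericMatrix n = Matrix.mvPolynomialX (Fin n) (Fin n) ℂ := rfl
  have h := Matrix.charpoly.univ_coeff_eval₂Hom (Fin n) (RingHom.id ℂ)
    (fun q => X q.1 q.2) (n - j)
  have hX : (Matrix.of (fun q => X q.1 q.2 : Fin n × Fin n → ℂ).curry) = X := by
    ext i k; rfl
  rw [hX] at h
  rw [Qpoly, hg, map_mul, map_pow, map_neg, map_one]
  rw [show (MvPolynomial.eval (fun q : Fin n × Fin n => X q.1 q.2)) =
    (MvPolynomial.eval₂Hom (RingHom.id ℂ) (fun q : Fin n × Fin n => X q.1 q.2) :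
      MvPolynomial (Fin n × Fin n) ℂ →+* ℂ) from rfl]
  rw [h]

lemma charpoly_conj {n : ℕ} (g : GL (Fin n) ℂ) (X : Matrix (Fin n) (Fin n) ℂ) :
    ((g : Matrix (Fin n) (Fin n) ℂ) * X * (↑g⁻¹ : Matrix (Fin n) (Fin n) ℂ)).charpoly
      = X.charpoly := by
  let φ := (Polynomial.C : ℂ →+* Polynomial ℂ).mapMatrix (m := Fin n)
  set G : Matrix (Fin n) (Fin n) (Polynomial ℂ) := φ (g : Matrix (Fin n) (Fin n) ℂ) with hG
  set G' : Matrix (Fin n) (Fin n) (Polynomial ℂ) := φ (↑g⁻¹ : Matrix (Fin n) (Fin n) ℂ) with hG'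
  have hgg : (g : Matrix (Fin n) (Fin n) ℂ) * (↑g⁻¹ : Matrix (Fin n) (Fin n) ℂ) = 1 := by
    rw [← Units.val_mul, mul_inv_cancel g, Units.val_one]
  have hgg' : (↑g⁻¹ : Matrix (Fin n) (Fin n) ℂ) * (g : Matrix (Fin n) (Fin n) ℂ) = 1 := by
    rw [← Units.val_mul, inv_mul_cancel g, Units.val_one]
  have hGG' : G * G' = 1 := by rw [hG, hG', ← map_mul, hgg, map_one]
  have hG'G : G' * G = 1 := by rw [hG, hG', ← map_mul, hgg', map_one]
  have hdiag : Matrix.scalar (Fin n) (Polynomial.X : Polynomial ℂ)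
      = (Polynomial.X : Polynomial ℂ) • (1 : Matrix (Fin n) (Fin n) (Polynomial ℂ)) := by
    rw [Matrix.scalar_apply, Matrix.smul_one_eq_diagonal]
  have hcm : Matrix.charmatrix ((g : Matrix (Fin n) (Fin n) ℂ) * X * (↑g⁻¹ : Matrix (Fin n) (Fin n) ℂ))
      = G * X.charmatrix * G' := by
    rw [Matrix.charmatrix, Matrix.charmatrix, Matrix.mul_sub, Matrix.sub_mul]
    congr 1
    · rw [hdiag, Matrix.mul_smul, Matrix.smul_mul, mul_one, hGG']
    · show φ _ = G * φ X * G'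
      rw [map_mul, map_mul]
  rw [Matrix.charpoly, hcm, Matrix.det_mul, Matrix.det_mul, mul_comm, ← mul_assoc,
    ← Matrix.det_mul, hG'G, Matrix.det_one, one_mul, Matrix.charpoly]

lemma exists_roots_fun {n : ℕ} (X : Matrix (Fin n) (Fin n) ℂ) :
    ∃ μ : Fin n → ℂ, X.charpoly = ∏ i : Fin n, (Polynomial.X - Polynomial.C (μ i)) := by
  have hmonic := X.charpoly_monic
  have hsplit : X.charpoly.Splits := IsAlgClosed.splits _
  have hprod := hsplit.eq_prod_roots_of_monic hmonic
  have hcard : Multiset.card X.charpoly.roots = n := by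
    rw [(Polynomial.splits_iff_card_roots).1 hsplit, Matrix.charpoly_natDegree_eq_dim,
      Fintype.card_fin]
  set l := X.charpoly.roots.toList with hl
  have hlen : l.length = n := by rw [hl, Multiset.length_toList, hcard]
  refine ⟨fun i => l.get (Fin.cast hlen.symm i), ?_⟩
  have key : X.charpoly.roots = Multiset.map (fun i => l.get (Fin.cast hlen.symm i)) Finset.univ.val := by
    have h1 : X.charpoly.roots = (l : Multiset ℂ) := (Multiset.coe_toList _).symm
    have h2 : l = List.ofFn (fun i => l.get (Fin.cast hlen.symm i)) := by
      apply List.ext_get (by simp [hlen])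
      intro i hi1 hi2
      simp
    rw [h1]
    conv_lhs => rw [h2]
    simp [Fin.univ_def, List.ofFn_eq_map]
  rw [hprod, key, Multiset.map_map]
  rfl

lemma charpoly_coeff_of_roots {n j : ℕ} (hj : j ≤ n) (X : Matrix (Fin n) (Fin n) ℂ)
    (μ : Fin n → ℂ) (h : X.charpoly = ∏ i : Fin n, (Polynomial.X - Polynomial.C (μ i))) :
    X.charpoly.coeff (n - j) = (-1 : ℂ)^j * MvPolynomial.eval μ (MvPolynomial.esymm (Fin n) ℂ j) := by
  set s : Multiset ℂ := Multiset.map μ Finset.univ.val with hs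
  have hcard : Multiset.card s = n := by simp [hs]
  have hprod : X.charpoly = (s.map fun t => Polynomial.X - Polynomial.C t).prod := by
    rw [h, hs, Multiset.map_map]; rfl
  have hnj : n - j ≤ Multiset.card s := by omega
  rw [hprod, Multiset.prod_X_sub_C_coeff s hnj, hcard]
  have hj' : n - (n - j) = j := by omega
  rw [hj']
  congr 1
  have h2 := MvPolynomial.aeval_esymm_eq_multiset_esymm (Fin n) ℂ (S := ℂ) j μ
  rw [← h2]
  rfl

lemma det_smul_one_sub (n : ℕ) (X : Matrix (Fin n) (Fin n) ℂ) (t : ℂ) :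
    (t • (1 : Matrix (Fin n) (Fin n) ℂ) - X).det = X.charpoly.eval t := by
  rw [Matrix.charpoly, ← Polynomial.coe_evalRingHom, RingHom.map_det]
  congr 1
  ext i j
  by_cases h : i = j
  · subst h
    simp [Matrix.charmatrix_apply_eq, Matrix.one_apply]
  · simp [Matrix.charmatrix_apply_ne _ _ _ h, Matrix.one_apply, h]

lemma conj_diag {n : ℕ} (X : Matrix (Fin n) (Fin n) ℂ) (μ : Fin n → ℂ)
    (hinj : Function.Injective μ)
    (h : X.charpoly = ∏ i : Fin n, (Polynomial.X - Polynomial.C (μ i))) :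
    ∃ g : GL (Fin n) ℂ, X = (↑g : Matrix (Fin n) (Fin n) ℂ) * Matrix.diagonal μ * (↑g⁻¹ : Matrix (Fin n) (Fin n) ℂ) := by
  rcases Nat.eq_zero_or_pos n with hn | hn
  · subst hn
    exact ⟨1, Subsingleton.elim _ _⟩
  have : Nonempty (Fin n) := ⟨⟨0, hn⟩⟩
  have hev : ∀ i : Fin n, ∃ v : Fin n → ℂ, v ≠ 0 ∧ X.mulVec v = μ i • v := by
    intro i
    have hdet : (μ i • (1 : Matrix (Fin n) (Fin n) ℂ) - X).det = 0 := by
      rw [det_smul_one_sub, h]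
      rw [Polynomial.eval_prod]
      apply Finset.prod_eq_zero (Finset.mem_univ i)
      simp
    obtain ⟨v, hv0, hv⟩ := (Matrix.exists_mulVec_eq_zero_iff).2 hdet
    refine ⟨v, hv0, ?_⟩
    have h2 := hv
    rw [Matrix.sub_mulVec, sub_eq_zero] at h2
    rw [← h2, Matrix.smul_mulVec, Matrix.one_mulVec]
  choose v hv0 hveq using hev
  have hli : LinearIndependent ℂ v := by
    apply Module.End.eigenvectors_linearIndependent' (X.mulVecLin) μ hinj v
    intro i
    constructor
    · rw [Module.End.mem_eigenspace_iff]
      exact hveq i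
    · exact hv0 i
  have hcard : Fintype.card (Fin n) = Module.finrank ℂ (Fin n → ℂ) := by simp
  let b : Module.Basis (Fin n) ℂ (Fin n → ℂ) := basisOfLinearIndependentOfCardEqFinrank hli hcard
  have hb : ⇑b = v := coe_basisOfLinearIndependentOfCardEqFinrank hli hcard
  let P : Matrix (Fin n) (Fin n) ℂ := (Pi.basisFun ℂ (Fin n)).toMatrix ⇑b
  have hP : ∀ i j, P i j = v j i := by
    intro i j
    simp [P, Module.Basis.toMatrix_apply, hb]
  have : Invertible P := (Pi.basisFun ℂ (Fin n)).invertibleToMatrix b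
  have hXP : X * P = P * Matrix.diagonal μ := by
    ext i j
    rw [Matrix.mul_apply, Matrix.mul_diagonal]
    have h3 : (X.mulVec (v j)) i = μ j * v j i := by rw [hveq j]; simp [Pi.smul_apply]
    rw [hP]
    rw [show ∑ k, X i k * P k j = X.mulVec (v j) i from by
      rw [Matrix.mulVec, dotProduct]; congr 1; ext k; rw [hP]]
    rw [h3, mul_comm]
  refine ⟨unitOfInvertible P, ?_⟩
  have h1 : (↑(unitOfInvertible P)⁻¹ : Matrix (Fin n) (Fin n) ℂ) = ⅟P := rfl
  have h2 : (↑(unitOfInvertible P) : Matrix (Fin n) (Fin n) ℂ) = P := rfl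
  rw [h1, h2]
  rw [← hXP, Matrix.mul_assoc, mul_invOf_self, mul_one]

lemma perm_conj_diag {n : ℕ} (σ : Equiv.Perm (Fin n)) (y : Fin n → ℂ) :
    ∃ g : GL (Fin n) ℂ, Matrix.diagonal (y ∘ σ) =
      (↑g : Matrix (Fin n) (Fin n) ℂ) * Matrix.diagonal y * (↑g⁻¹ : Matrix (Fin n) (Fin n) ℂ) := by
  let Pσ : Matrix (Fin n) (Fin n) ℂ := σ.toPEquiv.toMatrix
  let Pτ : Matrix (Fin n) (Fin n) ℂ := (σ⁻¹ : Equiv.Perm (Fin n)).toPEquiv.toMatrix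
  have h1 : Pσ * Pτ = 1 := by
    rw [show Pσ * Pτ = ((σ.toPEquiv.trans (σ⁻¹ : Equiv.Perm (Fin n)).toPEquiv).toMatrix : Matrix (Fin n) (Fin n) ℂ) from (PEquiv.toMatrix_trans _ _).symm,
      ← Equiv.toPEquiv_trans]
    rw [show Equiv.trans σ σ⁻¹ = Equiv.trans σ σ.symm from rfl, Equiv.self_trans_symm]
    show ((Equiv.refl (Fin n)).toPEquiv.toMatrix : Matrix (Fin n) (Fin n) ℂ) = 1
    rw [Equiv.toPEquiv_refl, PEquiv.toMatrix_refl]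
  have h2 : Pτ * Pσ = 1 := by
    rw [show Pτ * Pσ = (((σ⁻¹ : Equiv.Perm (Fin n)).toPEquiv.trans σ.toPEquiv).toMatrix : Matrix (Fin n) (Fin n) ℂ) from (PEquiv.toMatrix_trans _ _).symm,
      ← Equiv.toPEquiv_trans]
    rw [show Equiv.trans σ⁻¹ σ = Equiv.trans σ.symm σ from rfl, Equiv.symm_trans_self]
    show ((Equiv.refl (Fin n)).toPEquiv.toMatrix : Matrix (Fin n) (Fin n) ℂ) = 1
    rw [Equiv.toPEquiv_refl, PEquiv.toMatrix_refl]
  refine ⟨⟨Pσ, Pτ, h1, h2⟩, ?_⟩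
  show Matrix.diagonal (y ∘ σ) = Pσ * Matrix.diagonal y * Pτ
  rw [Matrix.mul_assoc, show (Pτ : Matrix (Fin n) (Fin n) ℂ) = (σ⁻¹ : Equiv.Perm (Fin n)).toPEquiv.toMatrix from rfl,
    PEquiv.mul_toMatrix_toPEquiv, PEquiv.toMatrix_toPEquiv_mul]
  ext i j
  rw [Matrix.submatrix_apply, Matrix.submatrix_apply]
  simp only [id]
  by_cases h : i = j
  · subst h
    rw [show (Equiv.symm σ⁻¹) i = σ i from rfl, Matrix.diagonal_apply_eq]
    simp
  · rw [Matrix.diagonal_apply_ne _ h, Matrix.diagonal_apply_ne]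
    intro hc
    exact h (σ.injective (by rw [show (Equiv.symm σ⁻¹) j = σ j from rfl] at hc; exact hc))

lemma eval_aeval_comp {σ' τ : Type*} (x : σ' → ℂ) (g : τ → MvPolynomial σ' ℂ)
    (Θ : MvPolynomial τ ℂ) :
    eval x (aeval g Θ) = eval (fun i => eval x (g i)) Θ := by
  rw [aeval_def, eval₂_comp_left (eval x) (algebraMap ℂ (MvPolynomial σ' ℂ)) g Θ]
  rw [show MvPolynomial.eval (fun i => eval x (g i)) =
    MvPolynomial.eval₂Hom (RingHom.id ℂ) (fun i => eval x (g i)) from rfl]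
  rw [coe_eval₂Hom]
  congr 1
  ext r
  simp

end Aux

theorem char_coeffs_generate_invariants (n : ℕ) :
    (∀ j : ℕ, 1 ≤ j → j ≤ n → (Qpoly n j).IsHomogeneous j) ∧
    (∀ j : ℕ, 1 ≤ j → j ≤ n → ∀ (g : GL (Fin n) ℂ) (X : Matrix (Fin n) (Fin n) ℂ),
      MvPolynomial.eval
          (fun q => ((g : Matrix (Fin n) (Fin n) ℂ) * X *
              (↑g⁻¹ : Matrix (Fin n) (Fin n) ℂ)) q.1 q.2) (Qpoly n j) =
        MvPolynomial.eval (fun q => X q.1 q.2) (Qpoly n j)) ∧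
    (∀ f : MvPolynomial (Fin n × Fin n) ℂ,
      (∀ (g : GL (Fin n) ℂ) (X : Matrix (Fin n) (Fin n) ℂ),
        MvPolynomial.eval
            (fun q => ((g : Matrix (Fin n) (Fin n) ℂ) * X *
                (↑g⁻¹ : Matrix (Fin n) (Fin n) ℂ)) q.1 q.2) f =
          MvPolynomial.eval (fun q => X q.1 q.2) f) →
      f ∈ Algebra.adjoin ℂ (Qpoly n '' (Set.Icc 1 n))) := by
  refine ⟨fun j _ hj2 => Qpoly_homog n j hj2, fun j _ _ g X => ?_, ?_⟩
  · rw [eval_Qpoly, eval_Qpoly, charpoly_conj]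
  intro f hf
  -- notation
  set E : Matrix (Fin n) (Fin n) ℂ → MvPolynomial (Fin n × Fin n) ℂ → ℂ :=
    fun X p => MvPolynomial.eval (fun q => X q.1 q.2) p with hE
  -- invariance restated
  have hinv : ∀ (g : GL (Fin n) ℂ) (Y : Matrix (Fin n) (Fin n) ℂ),
      E ((↑g : Matrix (Fin n) (Fin n) ℂ) * Y * (↑g⁻¹ : Matrix (Fin n) (Fin n) ℂ)) f = E Y f := hf
  -- diagonal restriction
  set dvar : Fin n × Fin n → MvPolynomial (Fin n) ℂ :=
    fun q => if q.1 = q.2 then MvPolynomial.X q.1 else 0 with hdvar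
  set fdiag : MvPolynomial (Fin n) ℂ := aeval dvar f with hfdiag
  have heval_fdiag : ∀ y : Fin n → ℂ, eval y fdiag = E (Matrix.diagonal y) f := by
    intro y
    rw [hfdiag, eval_aeval_comp]
    have hv : (fun q : Fin n × Fin n => eval y (dvar q))
        = fun q : Fin n × Fin n => (Matrix.diagonal y) q.1 q.2 := by
      funext q
      rw [hdvar]
      by_cases h : q.1 = q.2
      · simp only [h, if_true, eval_X, Matrix.diagonal_apply_eq]
      · simp only [h, if_false, map_zero]
        rw [Matrix.diagonal_apply_ne _ h]
    rw [hv]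
  have hsym : fdiag.IsSymmetric := by
    intro σ
    apply MvPolynomial.funext
    intro y
    rw [eval_rename, heval_fdiag, heval_fdiag]
    obtain ⟨g, hg⟩ := perm_conj_diag σ y
    rw [hg, hinv]
  -- the discriminant-type polynomial
  set Δsym : MvPolynomial (Fin n) ℂ :=
    ∏ p ∈ Finset.univ.offDiag, (MvPolynomial.X p.1 - MvPolynomial.X p.2) with hΔsym
  have hΔsym_sym : Δsym.IsSymmetric := by
    intro σ
    rw [hΔsym, map_prod]
    refine Finset.prod_bij' (fun p _ => ((σ p.1, σ p.2) : Fin n × Fin n))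
      (fun p _ => ((σ.symm p.1, σ.symm p.2) : Fin n × Fin n)) ?_ ?_ ?_ ?_ ?_
    · intro p hp
      rw [Finset.mem_offDiag] at hp ⊢
      exact ⟨Finset.mem_univ _, Finset.mem_univ _, fun hc => hp.2.2 (σ.injective hc)⟩
    · intro p hp
      rw [Finset.mem_offDiag] at hp ⊢
      exact ⟨Finset.mem_univ _, Finset.mem_univ _, fun hc => hp.2.2 (σ.symm.injective hc)⟩
    · intro p hp; simp
    · intro p hp; simp
    · intro p hp; simp [map_sub]
  -- representations via symmetric polynomials
  have hsurj := MvPolynomial.esymmAlgHom_surjective (σ := Fin n) (R := ℂ) (n := n)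
    (by simp)
  obtain ⟨Φ, hΦ⟩ := hsurj ⟨fdiag, hsym⟩
  obtain ⟨Ψ, hΨ⟩ := hsurj ⟨Δsym, hΔsym_sym⟩
  have hΦ' : aeval (fun i : Fin n => MvPolynomial.esymm (Fin n) ℂ ((i : ℕ) + 1)) Φ = fdiag := by
    have := congrArg Subtype.val hΦ
    rwa [MvPolynomial.esymmAlgHom_apply] at this
  have hΨ' : aeval (fun i : Fin n => MvPolynomial.esymm (Fin n) ℂ ((i : ℕ) + 1)) Ψ = Δsym := by
    have := congrArg Subtype.val hΨ
    rwa [MvPolynomial.esymmAlgHom_apply] at this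
  set Qs : Fin n → MvPolynomial (Fin n × Fin n) ℂ := fun i => Qpoly n ((i : ℕ) + 1) with hQs
  set F : MvPolynomial (Fin n × Fin n) ℂ := aeval Qs Φ with hF
  set Δmat : MvPolynomial (Fin n × Fin n) ℂ := aeval Qs Ψ with hΔmat
  -- key evaluation identity
  have hkey : ∀ (X : Matrix (Fin n) (Fin n) ℂ) (μ : Fin n → ℂ),
      X.charpoly = (∏ i : Fin n, (Polynomial.X - Polynomial.C (μ i))) →
      ∀ Θ : MvPolynomial (Fin n) ℂ,
        E X (aeval Qs Θ) =
          eval μ (aeval (fun i : Fin n => MvPolynomial.esymm (Fin n) ℂ ((i : ℕ) + 1)) Θ) := by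
    intro X μ hμ Θ
    show eval (fun q : Fin n × Fin n => X q.1 q.2) ((aeval Qs) Θ)
      = eval μ ((aeval fun i : Fin n => MvPolynomial.esymm (Fin n) ℂ ((i : ℕ) + 1)) Θ)
    rw [eval_aeval_comp, eval_aeval_comp]
    have hv : (fun i : Fin n => eval (fun q : Fin n × Fin n => X q.1 q.2) (Qs i))
        = fun i : Fin n => eval μ (MvPolynomial.esymm (Fin n) ℂ ((i : ℕ) + 1)) := by
      funext i
      rw [hQs]
      rw [eval_Qpoly, charpoly_coeff_of_roots (by omega) X μ hμ]
      rw [← mul_assoc, ← mul_pow]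
      norm_num
    rw [hv]
  -- pointwise equality on diagonalizable matrices
  have hpoint : ∀ X : Matrix (Fin n) (Fin n) ℂ,
      E X (Δmat * (f - F)) = 0 := by
    intro X
    obtain ⟨μ, hμ⟩ := exists_roots_fun X
    show eval (fun q : Fin n × Fin n => X q.1 q.2) (Δmat * (f - F)) = 0
    rw [map_mul, map_sub]
    by_cases hinj : Function.Injective μ
    · have hfX : eval (fun q => X q.1 q.2) f = eval (fun q => X q.1 q.2) F := by
        obtain ⟨g, hg⟩ := conj_diag X μ hinj hμ
        have h1 : E X f = E (Matrix.diagonal μ) f := by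
          conv_lhs => rw [hg]
          exact hinv g (Matrix.diagonal μ)
        have h2 : E (Matrix.diagonal μ) f = eval μ fdiag := (heval_fdiag μ).symm
        have h3 : E X F = eval μ fdiag := by
          rw [hF, hkey X μ hμ Φ, hΦ']
        rw [show eval (fun q => X q.1 q.2) f = E X f from rfl,
          show eval (fun q => X q.1 q.2) F = E X F from rfl, h1, h2, h3]
      rw [hfX, sub_self, mul_zero]
    · have hΔ0 : eval (fun q => X q.1 q.2) Δmat = 0 := by
        rw [show eval (fun q => X q.1 q.2) Δmat = E X Δmat from rfl, hΔmat,
          hkey X μ hμ Ψ, hΨ', hΔsym]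
        rw [map_prod]
        rw [Function.not_injective_iff] at hinj
        obtain ⟨a, b, hab, hne⟩ := hinj
        apply Finset.prod_eq_zero (i := ((a, b) : Fin n × Fin n))
        · rw [Finset.mem_offDiag]
          exact ⟨Finset.mem_univ _, Finset.mem_univ _, hne⟩
        · rw [map_sub, eval_X, eval_X]
          simpa [sub_eq_zero] using hab
      rw [hΔ0, zero_mul]
  -- Δmat is nonzero
  have hΔne : Δmat ≠ 0 := by
    intro hc
    set ν : Fin n → ℂ := fun i => (i : ℕ) with hν
    have hνinj : Function.Injective ν := by
      intro a b hab
      rw [hν] at hab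
      have : ((a : ℕ) : ℂ) = ((b : ℕ) : ℂ) := hab
      exact Fin.ext (Nat.cast_injective this)
    have hchar : (Matrix.diagonal ν).charpoly
        = ∏ i : Fin n, (Polynomial.X - Polynomial.C (ν i)) := by
      rw [Matrix.charpoly]
      have hcm : (Matrix.diagonal ν).charmatrix
          = Matrix.diagonal (fun i => Polynomial.X - Polynomial.C (ν i)) := by
        ext i j
        by_cases h : i = j
        · subst h
          rw [Matrix.charmatrix_apply_eq, Matrix.diagonal_apply_eq, Matrix.diagonal_apply_eq]
        · rw [Matrix.charmatrix_apply_ne _ _ _ h, Matrix.diagonal_apply_ne _ h,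
            Matrix.diagonal_apply_ne _ h, map_zero, neg_zero]
      rw [hcm, Matrix.det_diagonal]
    have h0 : E (Matrix.diagonal ν) Δmat = 0 := by
      rw [hc]
      exact map_zero (MvPolynomial.eval _)
    rw [hΔmat, hkey (Matrix.diagonal ν) ν hchar Ψ, hΨ', hΔsym, map_prod] at h0
    rw [Finset.prod_eq_zero_iff] at h0
    obtain ⟨p, hp, hp0⟩ := h0
    rw [Finset.mem_offDiag] at hp
    rw [map_sub, eval_X, eval_X, sub_eq_zero] at hp0
    exact hp.2.2 (hνinj hp0)
  -- conclude f = F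
  have hzero : Δmat * (f - F) = 0 := by
    apply MvPolynomial.funext
    intro x
    have hthis := hpoint (Matrix.of fun i j => x (i, j))
    have hxx : (fun q : Fin n × Fin n => (Matrix.of fun i j => x (i, j)) q.1 q.2) = x := by
      funext q
      exact congrArg x (Prod.mk.eta)
    rw [hE] at hthis
    simp only at hthis
    rw [hxx] at hthis
    rw [hthis, map_zero]
  have hfF : f = F := by
    rcases mul_eq_zero.1 hzero with h | h
    · exact absurd h hΔne
    · have := sub_eq_zero.1 h
      exact this
  rw [hfF, hF]
  have hmem : F ∈ Algebra.adjoin ℂ (Set.range Qs) := by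
    rw [Algebra.adjoin_range_eq_range_aeval]
    exact ⟨Φ, rfl⟩
  refine Algebra.adjoin_mono ?_ (by rw [← hF]; exact hmem)
  rintro _ ⟨i, rfl⟩
  exact ⟨(i : ℕ) + 1, ⟨by omega, by have := i.isLt; omega⟩, rfl⟩
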